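/- Let k be an algebraically closed field with char k ≠ 2, and let g, g', h, h' ∈ k with h ≠ 0 and h' ≠ 0. Then there exists a graded isomorphism T(g,h) ≅ T(g',h') if and only if g²·h' = (g')²·h. -/

import Mathlib

noncomputable section

/-- The free algebra on three generators `x, y, z` (indexed by `Fin 3`). -/
abbrev F3 (k : Type) [Field k] : Type := FreeAlgebra k (Fin 3)

noncomputable def X (k : Type) [Field k] : F3 k := FreeAlgebra.ι k 0
noncomputable def Y (k : Type) [Field k] : F3 k := FreeAlgebra.ι k 1
noncomputable def Z (k : Type) [Field k] : F3 k := FreeAlgebra.ι k 2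

/-- The quotient of the free algebra on `x, y, z` by the two-sided ideal
generated by the set `rels`. -/
abbrev quotAlg (k : Type) [Field k] (rels : Set (F3 k)) : Type :=
  RingQuot (fun a b : F3 k => a ∈ rels ∧ b = 0)

/-- The image of the `i`-th generator in the quotient algebra. -/
noncomputable def gen (k : Type) [Field k] (rels : Set (F3 k)) (i : Fin 3) :
    quotAlg k rels :=
  RingQuot.mkAlgHom k (fun a b : F3 k => a ∈ rels ∧ b = 0) (FreeAlgebra.ι k i)

/-- The `k`-linear span of the images of the generators in the quotient. -/
noncomputable def genSpan (k : Type) [Field k] (rels : Set (F3 k)) :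
    Submodule k (quotAlg k rels) :=
  Submodule.span k (Set.range (gen k rels))

/-- There is a graded isomorphism between the two quotient algebras:
a `k`-algebra isomorphism carrying the span of the generators onto the
span of the generators. -/
def GradedIso (k : Type) [Field k] (r1 r2 : Set (F3 k)) : Prop :=
  ∃ φ : quotAlg k r1 ≃ₐ[k] quotAlg k r2,
    Submodule.map φ.toLinearMap (genSpan k r1) = genSpan k r2

/-- The algebra `T(g,h) = k⟨x,y,z⟩/⟨xy − yx, zy + yz − x² − g·y², z² + h·y²⟩`. -/
noncomputable def Trel (k : Type) [Field k] (g h : k) : Set (F3 k) :=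
  {X k * Y k - Y k * X k,
   Z k * Y k + Y k * Z k - X k ^ 2 - g • Y k ^ 2,
   Z k ^ 2 + h • Y k ^ 2}

namespace Stmt1Aux



variable {k : Type} [Field k]

/-- relations hold in the quotient -/
theorem qrel {rels : Set (F3 k)} {r : F3 k} (hr : r ∈ rels) :
    RingQuot.mkAlgHom k (fun a b : F3 k => a ∈ rels ∧ b = 0) r = 0 := by
  have := RingQuot.mkAlgHom_rel k (s := fun a b : F3 k => a ∈ rels ∧ b = 0)
    (x := r) (y := 0) ⟨hr, rfl⟩
  simpa using this

theorem mem1 (g h : k) : X k * Y k - Y k * X k ∈ Trel k g h := Set.mem_insert _ _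
theorem mem2 (g h : k) : Z k * Y k + Y k * Z k - X k ^ 2 - g • Y k ^ 2 ∈ Trel k g h :=
  Set.mem_insert_iff.2 (Or.inr (Set.mem_insert _ _))
theorem mem3 (g h : k) : Z k ^ 2 + h • Y k ^ 2 ∈ Trel k g h :=
  Set.mem_insert_iff.2 (Or.inr (Set.mem_insert_iff.2 (Or.inr rfl)))

/-- the quotient relations in terms of the generators -/
theorem qr1 (g h : k) :
    gen k (Trel k g h) 0 * gen k (Trel k g h) 1
      = gen k (Trel k g h) 1 * gen k (Trel k g h) 0 := by
  have e := qrel (mem1 g h)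
  rw [map_sub, map_mul, map_mul, sub_eq_zero] at e
  exact e

theorem qr2 (g h : k) :
    gen k (Trel k g h) 2 * gen k (Trel k g h) 1 + gen k (Trel k g h) 1 * gen k (Trel k g h) 2
      = gen k (Trel k g h) 0 ^ 2 + g • gen k (Trel k g h) 1 ^ 2 := by
  have e := qrel (mem2 g h)
  rw [map_sub, map_sub, map_add, map_mul, map_mul, map_pow, map_smul, map_pow,
    sub_sub, sub_eq_zero] at e
  exact e

theorem qr3 (g h : k) :
    gen k (Trel k g h) 2 ^ 2 = -(h • gen k (Trel k g h) 1 ^ 2) := by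
  have e := qrel (mem3 g h)
  rw [map_add, map_pow, map_smul, map_pow, add_eq_zero_iff_eq_neg] at e
  exact e

/-! ### An 8-dimensional representation (quotient by degree ≥ 3 together with `zx`, `yz`). -/

abbrev E (i j : Fin 8) (c : k) : Matrix (Fin 8) (Fin 8) k := Matrix.single i j c

def mX : Matrix (Fin 8) (Fin 8) k := E 1 0 1 + E 4 1 1 + E 5 2 1 + E 6 3 1
def mY : Matrix (Fin 8) (Fin 8) k := E 2 0 1 + E 5 1 1 + E 7 2 1
def mZ (g h : k) : Matrix (Fin 8) (Fin 8) k := E 3 0 1 + E 4 2 1 + E 7 2 g + E 7 3 (-h)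

theorem mrel1 : (mX : Matrix (Fin 8) (Fin 8) k) * mY = mY * mX := by
  simp [mX, mY, add_mul, mul_add, Matrix.single_mul_single_same,
    Matrix.single_mul_single_of_ne, Fin.ne_of_val_ne]

theorem mrel2 (g h : k) :
    mZ g h * mY + mY * mZ g h - mX ^ 2 - g • (mY : Matrix (Fin 8) (Fin 8) k) ^ 2 = 0 := by
  simp [mX, mY, mZ, pow_two, add_mul, mul_add, Matrix.single_mul_single_same,
    Matrix.single_mul_single_of_ne, Fin.ne_of_val_ne, Matrix.smul_single]

theorem mrel3 (g h : k) :
    mZ g h ^ 2 + h • (mY : Matrix (Fin 8) (Fin 8) k) ^ 2 = 0 := by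
  simp [mY, mZ, pow_two, add_mul, mul_add, Matrix.single_mul_single_same,
    Matrix.single_mul_single_of_ne, Fin.ne_of_val_ne, Matrix.smul_single]
  rw [← Matrix.single_add]
  simp

def repF (g h : k) : F3 k →ₐ[k] Matrix (Fin 8) (Fin 8) k :=
  FreeAlgebra.lift k ![mX, mY, mZ g h]

theorem repF_X (g h : k) : repF g h (X k) = mX := by
  simp [repF, X, FreeAlgebra.lift_ι_apply]
theorem repF_Y (g h : k) : repF g h (Y k) = mY := by
  simp [repF, Y, FreeAlgebra.lift_ι_apply]
theorem repF_Z (g h : k) : repF g h (Z k) = mZ g h := by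
  simp [repF, Z, FreeAlgebra.lift_ι_apply]

theorem repF_rels (g h : k) : ∀ r ∈ Trel k g h, repF g h r = 0 := by
  intro r hr
  rcases hr with hr | hr | hr
  · subst hr
    rw [map_sub, map_mul, map_mul, repF_X, repF_Y, mrel1, sub_self]
  · subst hr
    rw [map_sub, map_sub, map_add, map_mul, map_mul, map_pow, map_smul, map_pow,
      repF_X, repF_Y, repF_Z]
    exact mrel2 g h
  · subst hr
    rw [map_add, map_pow, map_smul, map_pow, repF_Y, repF_Z]
    exact mrel3 g h

def rep (g h : k) : quotAlg k (Trel k g h) →ₐ[k] Matrix (Fin 8) (Fin 8) k :=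
  RingQuot.liftAlgHom k ⟨repF g h, by
    rintro a b ⟨ha, rfl⟩
    rw [map_zero]
    exact repF_rels g h a ha⟩

theorem rep_gen0 (g h : k) : rep g h (gen k (Trel k g h) 0) = mX := by
  rw [gen, rep, RingQuot.liftAlgHom_mkAlgHom_apply]; exact repF_X g h
theorem rep_gen1 (g h : k) : rep g h (gen k (Trel k g h) 1) = mY := by
  rw [gen, rep, RingQuot.liftAlgHom_mkAlgHom_apply]; exact repF_Y g h
theorem rep_gen2 (g h : k) : rep g h (gen k (Trel k g h) 2) = mZ g h := by
  rw [gen, rep, RingQuot.liftAlgHom_mkAlgHom_apply]; exact repF_Z g h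

/-! ### Entry lemmas -/

def L (g h : k) (u : Fin 3 → k) : Matrix (Fin 8) (Fin 8) k :=
  u 0 • mX + u 1 • mY + u 2 • mZ g h

theorem L10 (g h : k) (u : Fin 3 → k) : L g h u 1 0 = u 0 := by
  simp [L, mX, mY, mZ, Matrix.add_apply, Matrix.smul_apply,
    Matrix.single_apply_of_ne, Matrix.single_apply_same]
theorem L20 (g h : k) (u : Fin 3 → k) : L g h u 2 0 = u 1 := by
  simp [L, mX, mY, mZ, Matrix.add_apply, Matrix.smul_apply,
    Matrix.single_apply_of_ne, Matrix.single_apply_same]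
theorem L30 (g h : k) (u : Fin 3 → k) : L g h u 3 0 = u 2 := by
  simp [L, mX, mY, mZ, Matrix.add_apply, Matrix.smul_apply,
    Matrix.single_apply_of_ne, Matrix.single_apply_same]

theorem Lmul40 (g h : k) (u v : Fin 3 → k) :
    (L g h u * L g h v) 4 0 = u 0 * v 0 + u 2 * v 1 := by
  simp [L, mX, mY, mZ, Matrix.mul_apply, Fin.sum_univ_eight, Matrix.add_apply,
    Matrix.smul_apply, Matrix.single_apply_of_ne, Matrix.single_apply_same]

theorem Lmul50 (g h : k) (u v : Fin 3 → k) :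
    (L g h u * L g h v) 5 0 = u 1 * v 0 + u 0 * v 1 := by
  simp [L, mX, mY, mZ, Matrix.mul_apply, Fin.sum_univ_eight, Matrix.add_apply,
    Matrix.smul_apply, Matrix.single_apply_of_ne, Matrix.single_apply_same]
  try ring

theorem Lmul60 (g h : k) (u v : Fin 3 → k) :
    (L g h u * L g h v) 6 0 = u 0 * v 2 := by
  simp [L, mX, mY, mZ, Matrix.mul_apply, Fin.sum_univ_eight, Matrix.add_apply,
    Matrix.smul_apply, Matrix.single_apply_of_ne, Matrix.single_apply_same]

theorem Lmul70 (g h : k) (u v : Fin 3 → k) :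
    (L g h u * L g h v) 7 0 = (u 1 + g * u 2) * v 1 - h * u 2 * v 2 := by
  simp [L, mX, mY, mZ, Matrix.mul_apply, Fin.sum_univ_eight, Matrix.add_apply,
    Matrix.smul_apply, Matrix.single_apply_of_ne, Matrix.single_apply_same]
  try ring

/-- linear independence of the generators in the quotient. -/
theorem indep (g h : k) (u : Fin 3 → k)
    (hu : u 0 • gen k (Trel k g h) 0 + u 1 • gen k (Trel k g h) 1
      + u 2 • gen k (Trel k g h) 2 = 0) : u = 0 := by
  have e := congrArg (rep g h) hu
  rw [map_add, map_add, map_smul, map_smul, map_smul, map_zero,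
    rep_gen0, rep_gen1, rep_gen2] at e
  rw [show u 0 • mX + u 1 • mY + u 2 • mZ g h = L g h u from rfl] at e
  have e1 := congrFun (congrFun e 1) 0
  have e2 := congrFun (congrFun e 2) 0
  have e3 := congrFun (congrFun e 3) 0
  rw [L10] at e1
  rw [L20] at e2
  rw [L30] at e3
  funext i
  fin_cases i
  · simpa using e1
  · simpa using e2
  · simpa using e3

/-! ### The key scalar computation -/

theorem keyRel (g h g' h' : k) (h2k : (2 : k) ≠ 0) (hh : h ≠ 0) (hh' : h' ≠ 0)
    (a0 a1 a2 b0 b1 b2 c0 c1 c2 : k)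
    (hdet : a0 * (b1 * c2 - b2 * c1) - a1 * (b0 * c2 - b2 * c0)
      + a2 * (b0 * c1 - b1 * c0) ≠ 0)
    (E1 : a0 * b0 + a2 * b1 = b0 * a0 + b2 * a1)
    (E2 : a0 * b2 = b0 * a2)
    (R2b : (c1 * b0 + c0 * b1) + (b1 * c0 + b0 * c1)
      = (a1 * a0 + a0 * a1) + g * (b1 * b0 + b0 * b1))
    (R2c : c0 * b2 + b0 * c2 = a0 * a2 + g * (b0 * b2))
    (R2e : ((c1 + g' * c2) * b1 - h' * c2 * b2) + ((b1 + g' * b2) * c1 - h' * b2 * c2)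
      = ((a1 + g' * a2) * a1 - h' * a2 * a2) + g * ((b1 + g' * b2) * b1 - h' * b2 * b2))
    (R3a : (c0 * c0 + c2 * c1) + h * (b0 * b0 + b2 * b1) = 0)
    (R3c : c0 * c2 + h * (b0 * b2) = 0)
    (R3d : ((c1 + g' * c2) * c1 - h' * c2 * c2)
      + h * ((b1 + g' * b2) * b1 - h' * b2 * b2) = 0) :
    g ^ 2 * h' = g' ^ 2 * h := by
  -- step 1 : a2 = 0
  have ha2 : a2 = 0 := by
    by_contra hne
    apply hdet
    have key : a2 ^ 2 * (a0 * (b1 * c2 - b2 * c1) - a1 * (b0 * c2 - b2 * c0)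
        + a2 * (b0 * c1 - b1 * c0)) = 0 := by
      linear_combination (a2 * c2 * a0 - a2 ^ 2 * c0) * E1
        - (a2 ^ 2 * c1 - a2 * c2 * a1) * E2
    exact (mul_eq_zero.mp key).resolve_left (pow_ne_zero 2 hne)
  -- step 2 : b2 = 0
  have hb2 : b2 = 0 := by
    by_contra hne
    apply hdet
    have h1 : a1 = 0 := by
      have e : b2 * a1 = 0 := by linear_combination -E1 + b1 * ha2
      exact (mul_eq_zero.mp e).resolve_left hne
    have h0 : a0 = 0 := by
      have e : a0 * b2 = 0 := by linear_combination E2 + b0 * ha2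
      exact (mul_eq_zero.mp e).resolve_right hne
    rw [h0, h1, ha2]; ring
  have hDf : a0 * (b1 * c2 - b2 * c1) - a1 * (b0 * c2 - b2 * c0)
      + a2 * (b0 * c1 - b1 * c0) = c2 * (a0 * b1 - a1 * b0) := by
    rw [ha2, hb2]; ring
  rw [hDf] at hdet
  have hc2 : c2 ≠ 0 := fun hc => hdet (by rw [hc]; ring)
  have hab : a0 * b1 - a1 * b0 ≠ 0 := fun hc => hdet (by rw [hc]; ring)
  -- c0 = 0
  have hc0 : c0 = 0 := by
    have e : c0 * c2 = 0 := by linear_combination R3c - h * b0 * hb2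
    exact (mul_eq_zero.mp e).resolve_right hc2
  -- b0 = 0
  have hb0 : b0 = 0 := by
    have e : b0 * c2 = 0 := by linear_combination R2c + a0 * ha2 + (g * b0 - c0) * hb2
    exact (mul_eq_zero.mp e).resolve_right hc2
  have ha0b1 : a0 * b1 ≠ 0 := by
    intro hc; exact hab (by linear_combination hc - a1 * hb0)
  have ha0 : a0 ≠ 0 := fun hc => ha0b1 (by rw [hc]; ring)
  have hb1 : b1 ≠ 0 := fun hc => ha0b1 (by rw [hc]; ring)
  -- c1 = 0
  have hc1 : c1 = 0 := by
    have e : c2 * c1 = 0 := by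
      linear_combination R3a - c0 * hc0 - h * b0 * hb0 - h * b1 * hb2
    exact (mul_eq_zero.mp e).resolve_left hc2
  -- a1 = 0
  have ha1 : a1 = 0 := by
    have e : 2 * (a0 * a1) = 0 := by
      linear_combination -R2b + (2 * c1 - 2 * g * b1) * hb0 + 2 * b1 * hc0
    exact (mul_eq_zero.mp ((mul_eq_zero.mp e).resolve_left h2k)).resolve_left ha0
  -- key1 : g' * c2 = g * b1
  have key1 : g' * c2 = g * b1 := by
    have e : b1 * (g' * c2 - g * b1) = 0 := by
      rw [ha2, hb2, hc1, ha1] at R2e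
      linear_combination R2e
    have := (mul_eq_zero.mp e).resolve_left hb1
    linear_combination this
  -- key2 : h * b1^2 = h' * c2^2
  have key2 : h * b1 ^ 2 = h' * c2 ^ 2 := by
    rw [hb2, hc1] at R3d
    linear_combination R3d
  have hmain : g ^ 2 * h' * c2 ^ 2 = g' ^ 2 * h * c2 ^ 2 := by
    linear_combination (-(g ^ 2)) * key2 - h * (g' * c2 + g * b1) * key1
  exact mul_right_cancel₀ (pow_ne_zero 2 hc2) hmain

end Stmt1Aux

open Stmt1Aux

theorem stmt1 (k : Type) [Field k] [IsAlgClosed k] (hchar : ringChar k ≠ 2)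
    (g g' h h' : k) (hh : h ≠ 0) (hh' : h' ≠ 0) :
    GradedIso k (Trel k g h) (Trel k g' h') ↔ g ^ 2 * h' = g' ^ 2 * h := by
  have h2k : (2 : k) ≠ 0 := Ring.two_ne_zero hchar
  constructor
  · rintro ⟨φ, hspan⟩
    -- coefficients of the images of the generators
    have hmem : ∀ i : Fin 3, φ (gen k (Trel k g h) i)
        ∈ Submodule.span k (Set.range (gen k (Trel k g' h'))) := by
      intro i
      have : φ (gen k (Trel k g h) i) ∈ Submodule.map φ.toLinearMap (genSpan k (Trel k g h)) :=
        ⟨gen k (Trel k g h) i, Submodule.subset_span ⟨i, rfl⟩, rfl⟩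
      rw [hspan] at this
      exact this
    obtain ⟨a, ha⟩ := (Submodule.mem_span_range_iff_exists_fun k).mp (hmem 0)
    obtain ⟨b, hb⟩ := (Submodule.mem_span_range_iff_exists_fun k).mp (hmem 1)
    obtain ⟨c, hc⟩ := (Submodule.mem_span_range_iff_exists_fun k).mp (hmem 2)
    rw [Fin.sum_univ_three] at ha hb hc
    -- matrix images
    have ρa : rep g' h' (φ (gen k (Trel k g h) 0)) = L g' h' a := by
      rw [← ha, map_add, map_add, map_smul, map_smul, map_smul, rep_gen0, rep_gen1, rep_gen2]
      rfl
    have ρb : rep g' h' (φ (gen k (Trel k g h) 1)) = L g' h' b := by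
      rw [← hb, map_add, map_add, map_smul, map_smul, map_smul, rep_gen0, rep_gen1, rep_gen2]
      rfl
    have ρc : rep g' h' (φ (gen k (Trel k g h) 2)) = L g' h' c := by
      rw [← hc, map_add, map_add, map_smul, map_smul, map_smul, rep_gen0, rep_gen1, rep_gen2]
      rfl
    -- relations among images
    have hq1 := congrArg φ (qr1 g h)
    rw [map_mul, map_mul] at hq1
    have M1 : L g' h' a * L g' h' b = L g' h' b * L g' h' a := by
      have := congrArg (rep g' h') hq1
      rwa [map_mul, map_mul, ρa, ρb] at this
    have hq2 := congrArg φ (qr2 g h)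
    rw [map_add, map_mul, map_mul, map_add, map_pow, map_smul, map_pow] at hq2
    have M2 : L g' h' c * L g' h' b + L g' h' b * L g' h' c
        = L g' h' a * L g' h' a + g • (L g' h' b * L g' h' b) := by
      have := congrArg (rep g' h') hq2
      rwa [map_add, map_mul, map_mul, map_add, map_pow, map_smul, map_pow,
        ρa, ρb, ρc, pow_two, pow_two] at this
    have hq3 := congrArg φ (qr3 g h)
    rw [map_pow, map_neg, map_smul, map_pow] at hq3
    have M3 : L g' h' c * L g' h' c = -(h • (L g' h' b * L g' h' b)) := by
      have := congrArg (rep g' h') hq3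
      rwa [map_pow, map_neg, map_smul, map_pow, ρb, ρc, pow_two, pow_two] at this
    -- scalar equations
    have E1 := congrFun (congrFun M1 4) 0
    rw [Lmul40, Lmul40] at E1
    have E2 := congrFun (congrFun M1 6) 0
    rw [Lmul60, Lmul60] at E2
    have R2b := congrFun (congrFun M2 5) 0
    simp only [Matrix.add_apply, Matrix.smul_apply, smul_eq_mul, Lmul50] at R2b
    have R2c := congrFun (congrFun M2 6) 0
    simp only [Matrix.add_apply, Matrix.smul_apply, smul_eq_mul, Lmul60] at R2c
    have R2e := congrFun (congrFun M2 7) 0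
    simp only [Matrix.add_apply, Matrix.smul_apply, smul_eq_mul, Lmul70] at R2e
    have R3a := congrFun (congrFun M3 4) 0
    simp only [Matrix.neg_apply, Matrix.smul_apply, smul_eq_mul, Lmul40] at R3a
    have R3c := congrFun (congrFun M3 6) 0
    simp only [Matrix.neg_apply, Matrix.smul_apply, smul_eq_mul, Lmul60] at R3c
    have R3d := congrFun (congrFun M3 7) 0
    simp only [Matrix.neg_apply, Matrix.smul_apply, smul_eq_mul, Lmul70] at R3d
    -- the determinant is nonzero
    have hdet : a 0 * (b 1 * c 2 - b 2 * c 1) - a 1 * (b 0 * c 2 - b 2 * c 0)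
        + a 2 * (b 0 * c 1 - b 1 * c 0) ≠ 0 := by
      intro h0
      have hdet0 : (!![a 0, a 1, a 2; b 0, b 1, b 2; c 0, c 1, c 2] : Matrix (Fin 3) (Fin 3) k).det
          = 0 := by
        rw [Matrix.det_fin_three]
        simp [Matrix.vecHead, Matrix.vecTail]
        linear_combination h0
      obtain ⟨v, hv, hzero⟩ := Matrix.exists_vecMul_eq_zero_iff.mpr hdet0
      have z0 := congrFun hzero 0
      have z1 := congrFun hzero 1
      have z2 := congrFun hzero 2
      simp [Matrix.vecMul, dotProduct, Fin.sum_univ_three, Matrix.vecHead,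
        Matrix.vecTail] at z0 z1 z2
      -- the corresponding combination of generators dies under φ
      have hcomb : φ (v 0 • gen k (Trel k g h) 0 + v 1 • gen k (Trel k g h) 1
          + v 2 • gen k (Trel k g h) 2) = 0 := by
        rw [map_add, map_add, map_smul, map_smul, map_smul, ← ha, ← hb, ← hc]
        match_scalars
        · linear_combination z0
        · linear_combination z1
        · linear_combination z2
      have := indep g h v (by
        apply φ.injective
        rw [map_zero]
        exact hcomb)
      exact hv this
    exact keyRel g h g' h' h2k hh hh' (a 0) (a 1) (a 2) (b 0) (b 1) (b 2) (c 0) (c 1) (c 2)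
      hdet E1 E2 (by linear_combination R2b) (by linear_combination R2c)
      (by linear_combination R2e) (by linear_combination R3a) (by linear_combination R3c)
      (by linear_combination R3d)
  · intro hcond
    -- find s with s^2 * h = h' and g * s = g'
    obtain ⟨s, hsh, hgs⟩ : ∃ s : k, s ^ 2 * h = h' ∧ g * s = g' := by
      by_cases hg : g = 0
      · obtain ⟨s, hs⟩ := IsAlgClosed.exists_pow_nat_eq (h' / h) (n := 2) (by norm_num)
        refine ⟨s, by rw [hs]; exact div_mul_cancel₀ h' hh, ?_⟩
        have : g' ^ 2 * h = 0 := by rw [← hcond, hg]; ring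
        have : g' = 0 := by
          rcases mul_eq_zero.mp this with h' | h'
          · exact pow_eq_zero_iff (by norm_num) |>.mp h'
          · exact absurd h' hh
        rw [hg, this]; ring
      · refine ⟨g' / g, ?_, by field_simp⟩
        field_simp
        linear_combination -hcond
    have hs0 : s ≠ 0 := by
      intro h0
      apply hh'
      rw [← hsh, h0]; ring
    obtain ⟨α, hα⟩ := IsAlgClosed.exists_pow_nat_eq s (n := 2) (by norm_num)
    have hα0 : α ≠ 0 := by
      intro h0
      apply hs0
      rw [← hα, h0]; ring
    -- the forward algebra morphism
    set Gt := gen k (Trel k g' h') with hGt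
    set Gs := gen k (Trel k g h) with hGs
    have hss : s * s⁻¹ = 1 := mul_inv_cancel₀ hs0
    have hαinv : α⁻¹ ^ 2 = s⁻¹ := by rw [inv_pow, hα]
    have q1t := qr1 g' h'
    have q2t := qr2 g' h'
    have q3t := qr3 g' h'
    have q1s := qr1 g h
    have q2s := qr2 g h
    have q3s := qr3 g h
    rw [← hGt] at q1t q2t q3t
    rw [← hGs] at q1s q2s q3s
    have fwd_rels : ∀ r ∈ Trel k g h,
        (FreeAlgebra.lift k ![α • Gt 0, s • Gt 1, Gt 2] : F3 k →ₐ[k] _) r = 0 := by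
      intro r hr
      rcases hr with hr | hr | hr <;> subst hr <;>
        simp only [map_sub, map_add, map_mul, map_pow, map_smul, X, Y, Z,
          FreeAlgebra.lift_ι_apply, Matrix.cons_val_zero, Matrix.cons_val_one,
          Matrix.head_cons, Matrix.cons_val_two, Matrix.tail_cons] <;>
        simp only [smul_mul_assoc, mul_smul_comm, smul_pow, smul_smul]
      · rw [q1t]
        match_scalars <;> ring1
      · rw [eq_sub_of_add_eq q2t]
        match_scalars <;>
          first
            | ring1
            | linear_combination -hα
            | linear_combination (-s) * hgs
            | linear_combination hsh
            | linear_combination -hαinv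
            | linear_combination (s⁻¹ ^ 2) * hgs - g * s⁻¹ * hss
            | linear_combination (-(s⁻¹ ^ 2)) * hsh + h * (s * s⁻¹ + 1) * hss
      · rw [q3t]
        match_scalars <;>
          first
            | ring1
            | linear_combination -hα
            | linear_combination (-s) * hgs
            | linear_combination hsh
            | linear_combination -hαinv
            | linear_combination (s⁻¹ ^ 2) * hgs - g * s⁻¹ * hss
            | linear_combination (-(s⁻¹ ^ 2)) * hsh + h * (s * s⁻¹ + 1) * hss
    have bwd_rels : ∀ r ∈ Trel k g' h',
        (FreeAlgebra.lift k ![α⁻¹ • Gs 0, s⁻¹ • Gs 1, Gs 2] : F3 k →ₐ[k] _) r = 0 := by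
      intro r hr
      rcases hr with hr | hr | hr <;> subst hr <;>
        simp only [map_sub, map_add, map_mul, map_pow, map_smul, X, Y, Z,
          FreeAlgebra.lift_ι_apply, Matrix.cons_val_zero, Matrix.cons_val_one,
          Matrix.head_cons, Matrix.cons_val_two, Matrix.tail_cons] <;>
        simp only [smul_mul_assoc, mul_smul_comm, smul_pow, smul_smul]
      · rw [q1s]
        match_scalars <;> ring1
      · rw [eq_sub_of_add_eq q2s]
        match_scalars <;>
          first
            | ring1
            | linear_combination -hα
            | linear_combination (-s) * hgs
            | linear_combination hsh
            | linear_combination -hαinv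
            | linear_combination (s⁻¹ ^ 2) * hgs - g * s⁻¹ * hss
            | linear_combination (-(s⁻¹ ^ 2)) * hsh + h * (s * s⁻¹ + 1) * hss
      · rw [q3s]
        match_scalars <;>
          first
            | ring1
            | linear_combination -hα
            | linear_combination (-s) * hgs
            | linear_combination hsh
            | linear_combination -hαinv
            | linear_combination (s⁻¹ ^ 2) * hgs - g * s⁻¹ * hss
            | linear_combination (-(s⁻¹ ^ 2)) * hsh + h * (s * s⁻¹ + 1) * hss
    set ψ : quotAlg k (Trel k g h) →ₐ[k] quotAlg k (Trel k g' h') :=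
      RingQuot.liftAlgHom k ⟨FreeAlgebra.lift k ![α • Gt 0, s • Gt 1, Gt 2], by
        rintro x y ⟨hx, rfl⟩
        rw [map_zero]
        exact fwd_rels x hx⟩ with hψ
    set ψ' : quotAlg k (Trel k g' h') →ₐ[k] quotAlg k (Trel k g h) :=
      RingQuot.liftAlgHom k ⟨FreeAlgebra.lift k ![α⁻¹ • Gs 0, s⁻¹ • Gs 1, Gs 2], by
        rintro x y ⟨hx, rfl⟩
        rw [map_zero]
        exact bwd_rels x hx⟩ with hψ'
    have ψ_gen0 : ψ (Gs 0) = α • Gt 0 := by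
      rw [hψ, hGs, gen, RingQuot.liftAlgHom_mkAlgHom_apply]
      simp [FreeAlgebra.lift_ι_apply]
    have ψ_gen1 : ψ (Gs 1) = s • Gt 1 := by
      rw [hψ, hGs, gen, RingQuot.liftAlgHom_mkAlgHom_apply]
      simp [FreeAlgebra.lift_ι_apply]
    have ψ_gen2 : ψ (Gs 2) = Gt 2 := by
      rw [hψ, hGs, gen, RingQuot.liftAlgHom_mkAlgHom_apply]
      simp [FreeAlgebra.lift_ι_apply]
    have ψ'_gen0 : ψ' (Gt 0) = α⁻¹ • Gs 0 := by
      rw [hψ', hGt, gen, RingQuot.liftAlgHom_mkAlgHom_apply]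
      simp [FreeAlgebra.lift_ι_apply]
    have ψ'_gen1 : ψ' (Gt 1) = s⁻¹ • Gs 1 := by
      rw [hψ', hGt, gen, RingQuot.liftAlgHom_mkAlgHom_apply]
      simp [FreeAlgebra.lift_ι_apply]
    have ψ'_gen2 : ψ' (Gt 2) = Gs 2 := by
      rw [hψ', hGt, gen, RingQuot.liftAlgHom_mkAlgHom_apply]
      simp [FreeAlgebra.lift_ι_apply]
    have comp1 : ψ.comp ψ' = AlgHom.id k (quotAlg k (Trel k g' h')) := by
      apply RingQuot.ringQuot_ext'
      apply FreeAlgebra.hom_ext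
      funext i
      simp only [Function.comp_apply, AlgHom.coe_comp, AlgHom.coe_id, id_eq, Function.comp]
      fin_cases i
      · show ψ (ψ' (Gt 0)) = Gt 0
        rw [ψ'_gen0, map_smul, ψ_gen0, smul_smul, inv_mul_cancel₀ hα0, one_smul]
      · show ψ (ψ' (Gt 1)) = Gt 1
        rw [ψ'_gen1, map_smul, ψ_gen1, smul_smul, inv_mul_cancel₀ hs0, one_smul]
      · show ψ (ψ' (Gt 2)) = Gt 2
        rw [ψ'_gen2, ψ_gen2]
    have comp2 : ψ'.comp ψ = AlgHom.id k (quotAlg k (Trel k g h)) := by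
      apply RingQuot.ringQuot_ext'
      apply FreeAlgebra.hom_ext
      funext i
      simp only [Function.comp_apply, AlgHom.coe_comp, AlgHom.coe_id, id_eq, Function.comp]
      fin_cases i
      · show ψ' (ψ (Gs 0)) = Gs 0
        rw [ψ_gen0, map_smul, ψ'_gen0, smul_smul, mul_inv_cancel₀ hα0, one_smul]
      · show ψ' (ψ (Gs 1)) = Gs 1
        rw [ψ_gen1, map_smul, ψ'_gen1, smul_smul, mul_inv_cancel₀ hs0, one_smul]
      · show ψ' (ψ (Gs 2)) = Gs 2
        rw [ψ_gen2, ψ'_gen2]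
    refine ⟨AlgEquiv.ofAlgHom ψ ψ' comp1 comp2, ?_⟩
    have hcoe : (AlgEquiv.ofAlgHom ψ ψ' comp1 comp2).toLinearMap = ψ.toLinearMap := rfl
    rw [hcoe, genSpan, genSpan, ← hGs, ← hGt]
    rw [Submodule.map_span]
    apply le_antisymm
    · rw [Submodule.span_le]
      have himg : ∀ j : Fin 3, ψ (Gs j) ∈ Submodule.span k (Set.range Gt) := by
        intro j
        fin_cases j
        · show ψ (Gs 0) ∈ _
          rw [ψ_gen0]
          exact Submodule.smul_mem _ _ (Submodule.subset_span ⟨0, rfl⟩)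
        · show ψ (Gs 1) ∈ _
          rw [ψ_gen1]
          exact Submodule.smul_mem _ _ (Submodule.subset_span ⟨1, rfl⟩)
        · show ψ (Gs 2) ∈ _
          rw [ψ_gen2]
          exact Submodule.subset_span ⟨2, rfl⟩
      rintro _ ⟨_, ⟨i, rfl⟩, rfl⟩
      exact himg i
    · rw [Submodule.span_le]
      have hmemim : ∀ j : Fin 3, ψ (Gs j) ∈ Submodule.span k (ψ.toLinearMap '' Set.range Gs) :=
        fun j => Submodule.subset_span ⟨Gs j, ⟨j, rfl⟩, rfl⟩
      have himg : ∀ j : Fin 3, Gt j ∈ Submodule.span k (ψ.toLinearMap '' Set.range Gs) := by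
        intro j
        fin_cases j
        · show Gt 0 ∈ _
          have e : Gt 0 = α⁻¹ • ψ (Gs 0) := by
            rw [ψ_gen0, smul_smul, inv_mul_cancel₀ hα0, one_smul]
          rw [e]
          exact Submodule.smul_mem _ _ (hmemim 0)
        · show Gt 1 ∈ _
          have e : Gt 1 = s⁻¹ • ψ (Gs 1) := by
            rw [ψ_gen1, smul_smul, inv_mul_cancel₀ hs0, one_smul]
          rw [e]
          exact Submodule.smul_mem _ _ (hmemim 1)
        · show Gt 2 ∈ _
          have e : Gt 2 = ψ (Gs 2) := (ψ_gen2).symm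
          rw [e]
          exact hmemim 2
      rintro _ ⟨i, rfl⟩
      exact himg i
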